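/- Suppose $a_2 = a_1 - a_1^2$ and the generalized Dehn-filling hypotheses hold as above. Then for any reals $r,s$, $r\log(-m(\theta)) + s\log(-l(\theta)) = \frac{i(r + a_1 s)}{2(p + a_1 q)}\theta + \frac{i(2a_1 - 3a_1^2 + a_1^3 - a_3)(ps - qr)}{48(p+a_1 q)^4}\theta^3 + O(\theta^4)$; in particular the $\theta^2$ coefficient vanishes. -/

import Mathlib

open Filter Asymptotics

lemma pow_isBigO_pow' {j k : ℕ} (h : j ≤ k) :
    (fun θ : ℂ => θ ^ k) =O[nhds 0] fun θ : ℂ => θ ^ j := by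
  rw [isBigO_iff]
  refine ⟨1, ?_⟩
  filter_upwards [Metric.closedBall_mem_nhds (0 : ℂ) one_pos] with θ hθ
  have hθ1 : ‖θ‖ ≤ 1 := by simpa using hθ
  simp only [norm_pow, one_mul]
  exact pow_le_pow_of_le_one (norm_nonneg _) hθ1 h

lemma log_one_sub_isBigO' :
    (fun z : ℂ => Complex.log (1 - z) + (z + z ^ 2 / 2 + z ^ 3 / 3)) =O[nhds 0]
      fun z : ℂ => z ^ 4 := by
  rw [isBigO_iff]
  refine ⟨2, ?_⟩
  filter_upwards [Metric.closedBall_mem_nhds (0 : ℂ) (by norm_num : (0:ℝ) < 1/2)] with z hz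
  have hz2 : ‖z‖ ≤ 1 / 2 := by simpa using hz
  set φ : ℂ → ℂ := fun w => Complex.log (1 - w) + (w + w ^ 2 / 2 + w ^ 3 / 3) with hφ
  set s : Set ℂ := Metric.closedBall (0 : ℂ) ‖z‖ with hs
  have key : ∀ w ∈ s, HasDerivWithinAt φ (-w ^ 3 / (1 - w)) s w := by
    intro w hw
    have hwz : ‖w‖ ≤ ‖z‖ := by simpa [hs] using hw
    have hwn : ‖w‖ ≤ 1 / 2 := le_trans hwz hz2
    have hre : 0 < (1 - w).re := by
      have h1 : |w.re| ≤ ‖w‖ := Complex.abs_re_le_norm w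
      have := (abs_le.mp h1).2
      simp only [Complex.sub_re, Complex.one_re]
      linarith
    have h1w : (1 : ℂ) - w ≠ 0 := by
      intro hcon
      rw [hcon] at hre
      simp at hre
    have hlog : HasDerivAt (fun w : ℂ => Complex.log (1 - w)) (-1 / (1 - w)) w := by
      have h1 : HasDerivAt (fun w : ℂ => 1 - w) (-1) w := by
        exact (hasDerivAt_id' w).const_sub 1
      exact h1.clog (Complex.mem_slitPlane_iff.mpr (Or.inl hre))
    have hpoly : HasDerivAt (fun w : ℂ => w + w ^ 2 / 2 + w ^ 3 / 3) (1 + w + w ^ 2) w := by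
      have h1 := ((hasDerivAt_id' w).add ((hasDerivAt_pow 2 w).div_const 2)).add
        ((hasDerivAt_pow 3 w).div_const 3)
      refine h1.congr_deriv ?_
      norm_num <;> ring
    have htot := hlog.add hpoly
    have heq : -1 / (1 - w) + (1 + w + w ^ 2) = -w ^ 3 / (1 - w) := by
      field_simp
      ring
    rw [heq] at htot
    exact htot.hasDerivWithinAt
  have bound : ∀ w ∈ s, ‖-w ^ 3 / (1 - w)‖ ≤ 2 * ‖z‖ ^ 3 := by
    intro w hw
    have hwz : ‖w‖ ≤ ‖z‖ := by simpa [hs] using hw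
    have hwn : ‖w‖ ≤ 1 / 2 := le_trans hwz hz2
    have hlow : (1:ℝ) / 2 ≤ ‖(1:ℂ) - w‖ := by
      have := norm_sub_norm_le (1 : ℂ) w
      simp only [norm_one] at this
      linarith
    rw [norm_div, norm_neg, norm_pow]
    rw [div_le_iff₀ (by linarith)]
    calc ‖w‖ ^ 3 ≤ ‖z‖ ^ 3 := pow_le_pow_left₀ (norm_nonneg _) hwz 3
      _ = (2 * ‖z‖ ^ 3) * (1/2) := by ring
      _ ≤ (2 * ‖z‖ ^ 3) * ‖(1:ℂ) - w‖ := by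
          apply mul_le_mul_of_nonneg_left hlow
          positivity
  have hmvt := (convex_closedBall (0:ℂ) ‖z‖).norm_image_sub_le_of_norm_hasDerivWithin_le
    key bound (Metric.mem_closedBall_self (norm_nonneg _))
    (by simpa [hs] using le_refl ‖z‖ : z ∈ s)
  have hφ0 : φ 0 = 0 := by simp [hφ]
  rw [hφ0, sub_zero, sub_zero] at hmvt
  calc ‖φ z‖ ≤ 2 * ‖z‖ ^ 3 * ‖z‖ := hmvt
    _ = 2 * ‖z ^ 4‖ := by rw [norm_pow]; ring

set_option maxHeartbeats 2000000 in
theorem taylor_expansion_log_combination (a1 a2 a3 : ℂ) (ha1 : a1.im ≠ 0)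
    (ha2 : a2 = a1 - a1 ^ 2)
    (p q : ℝ) (hpq : (p, q) ≠ (0, 0))
    (m l : ℂ → ℂ) (hm : AnalyticAt ℂ m 0) (hl : AnalyticAt ℂ l 0)
    (hm0 : m 0 = -1) (hl0 : l 0 = -1)
    (hrel : (fun θ : ℂ => l θ - (-1 + a1 * (m θ + 1) + a2 / 2 * (m θ + 1) ^ 2 +
        a3 / 6 * (m θ + 1) ^ 3)) =O[nhds 0] fun θ : ℂ => (m θ + 1) ^ 4)
    (hdehn : ∀ᶠ θ : ℂ in nhds 0,
      (p : ℂ) * Complex.log (-(m θ)) + (q : ℂ) * Complex.log (-(l θ)) =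
        Complex.I * θ / 2) :
    ∀ r s : ℝ,
      (fun θ : ℂ => (r : ℂ) * Complex.log (-(m θ)) + (s : ℂ) * Complex.log (-(l θ)) -
          (Complex.I * ((r : ℂ) + a1 * s) / (2 * ((p : ℂ) + a1 * q)) * θ +
            Complex.I * (2 * a1 - 3 * a1 ^ 2 + a1 ^ 3 - a3) * ((p : ℂ) * s - (q : ℂ) * r) /
              (48 * ((p : ℂ) + a1 * q) ^ 4) * θ ^ 3))
        =O[nhds 0] fun θ : ℂ => θ ^ 4 := by
  intro r s
  -- nonvanishing of p + a1 q
  have hA0 : (p : ℂ) + a1 * q ≠ 0 := by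
    intro h
    have him := congrArg Complex.im h
    simp [Complex.add_im, Complex.mul_im, Complex.ofReal_im, Complex.ofReal_re] at him
    rcases him with him | him
    · exact ha1 him
    · have hre := congrArg Complex.re h
      simp [Complex.add_re, Complex.mul_re, Complex.ofReal_im, Complex.ofReal_re, him] at hre
      exact hpq (by simp [hre, him])
  -- constants
  obtain ⟨A, hA_def⟩ : ∃ x : ℂ, x = -((p : ℂ) + a1 * q) := ⟨_, rfl⟩
  obtain ⟨B, hB_def⟩ : ∃ x : ℂ, x = -((p : ℂ) / 2 + q * (a2 / 2 + a1 ^ 2 / 2)) := ⟨_, rfl⟩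
  obtain ⟨C, hC_def⟩ : ∃ x : ℂ, x = -((p : ℂ) / 3 + q * (a3 / 6 + a1 * a2 / 2 + a1 ^ 3 / 3)) := ⟨_, rfl⟩
  obtain ⟨A', hA'_def⟩ : ∃ x : ℂ, x = -((r : ℂ) + a1 * s) := ⟨_, rfl⟩
  obtain ⟨B', hB'_def⟩ : ∃ x : ℂ, x = -((r : ℂ) / 2 + s * (a2 / 2 + a1 ^ 2 / 2)) := ⟨_, rfl⟩
  obtain ⟨C', hC'_def⟩ : ∃ x : ℂ, x = -((r : ℂ) / 3 + s * (a3 / 6 + a1 * a2 / 2 + a1 ^ 3 / 3)) := ⟨_, rfl⟩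
  have hA : A ≠ 0 := by rw [hA_def]; exact neg_ne_zero.mpr hA0
  obtain ⟨α, hα_def⟩ : ∃ x : ℂ, x = Complex.I / (2 * A) := ⟨_, rfl⟩
  obtain ⟨β, hβ_def⟩ : ∃ x : ℂ, x = -(B * α ^ 2) / A := ⟨_, rfl⟩
  obtain ⟨γ, hγ_def⟩ : ∃ x : ℂ, x = -(2 * B * α * β + C * α ^ 3) / A := ⟨_, rfl⟩
  -- basic limits
  have humto : Tendsto (fun θ => m θ + 1) (nhds 0) (nhds 0) := by
    have h1 := hm.continuousAt.tendsto
    rw [hm0] at h1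
    simpa using h1.add (tendsto_const_nhds (x := (1:ℂ)))
  have hvmto : Tendsto (fun θ => l θ + 1) (nhds 0) (nhds 0) := by
    have h1 := hl.continuousAt.tendsto
    rw [hl0] at h1
    simpa using h1.add (tendsto_const_nhds (x := (1:ℂ)))
  -- u = m+1 is O(θ)
  have huO : (fun θ => m θ + 1) =O[nhds 0] fun θ : ℂ => θ := by
    have h1 := hm.differentiableAt.hasFDerivAt.isBigO_sub
    exact h1.congr (fun θ => by rw [hm0]; ring) (fun θ => by simp)
  have hvO : (fun θ => l θ + 1) =O[nhds 0] fun θ : ℂ => θ := by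
    have h1 := hl.differentiableAt.hasFDerivAt.isBigO_sub
    exact h1.congr (fun θ => by rw [hl0]; ring) (fun θ => by simp)
  have hu4 : (fun θ => (m θ + 1) ^ 4) =O[nhds 0] fun θ : ℂ => θ ^ 4 := huO.pow 4
  have hupow : ∀ k, 4 ≤ k →
      (fun θ => (m θ + 1) ^ k) =O[nhds 0] fun θ : ℂ => θ ^ 4 :=
    fun k hk => (huO.pow k).trans (pow_isBigO_pow' hk)
  -- log expansions
  have hLm : (fun θ => Complex.log (-(m θ)) + ((m θ + 1) + (m θ + 1) ^ 2 / 2 +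
      (m θ + 1) ^ 3 / 3)) =O[nhds 0] fun θ : ℂ => θ ^ 4 := by
    have hcomp := log_one_sub_isBigO'.comp_tendsto humto
    exact (hcomp.congr_left fun θ => by
      simp only [Function.comp_apply]
      rw [show (1 : ℂ) - (m θ + 1) = -(m θ) by ring]).trans hu4
  have hLl : (fun θ => Complex.log (-(l θ)) + ((l θ + 1) + (l θ + 1) ^ 2 / 2 +
      (l θ + 1) ^ 3 / 3)) =O[nhds 0] fun θ : ℂ => θ ^ 4 := by
    have hcomp := log_one_sub_isBigO'.comp_tendsto hvmto
    exact (hcomp.congr_left fun θ => by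
      simp only [Function.comp_apply]
      rw [show (1 : ℂ) - (l θ + 1) = -(l θ) by ring]).trans (hvO.pow 4)
  -- v ≡ Q(u) mod θ⁴
  have hrel' : (fun θ => l θ + 1 - (a1 * (m θ + 1) + a2 / 2 * (m θ + 1) ^ 2 +
      a3 / 6 * (m θ + 1) ^ 3)) =O[nhds 0] fun θ : ℂ => θ ^ 4 :=
    (hrel.congr_left fun θ => by ring).trans hu4
  -- Q tends to 0
  have hQto : Tendsto (fun θ => a1 * (m θ + 1) + a2 / 2 * (m θ + 1) ^ 2 +
      a3 / 6 * (m θ + 1) ^ 3) (nhds 0) (nhds 0) := by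
    have h1 := ((humto.const_mul a1).add ((humto.pow 2).const_mul (a2/2))).add
      ((humto.pow 3).const_mul (a3/6))
    simpa using h1
  -- v² ≡ Q² mod θ⁴
  have hv2 : (fun θ => (l θ + 1) ^ 2 - (a1 * (m θ + 1) + a2 / 2 * (m θ + 1) ^ 2 +
      a3 / 6 * (m θ + 1) ^ 3) ^ 2) =O[nhds 0] fun θ : ℂ => θ ^ 4 := by
    have hb : (fun θ => (l θ + 1) + (a1 * (m θ + 1) + a2 / 2 * (m θ + 1) ^ 2 +
        a3 / 6 * (m θ + 1) ^ 3)) =O[nhds 0] (fun _ : ℂ => (1:ℂ)) :=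
      (hvmto.add hQto).isBigO_one ℂ
    exact (hrel'.mul hb).congr (fun θ => by ring) (fun θ => by rw [mul_one])
  -- v³ ≡ Q³ mod θ⁴
  have hv3 : (fun θ => (l θ + 1) ^ 3 - (a1 * (m θ + 1) + a2 / 2 * (m θ + 1) ^ 2 +
      a3 / 6 * (m θ + 1) ^ 3) ^ 3) =O[nhds 0] fun θ : ℂ => θ ^ 4 := by
    have hb : (fun θ => (l θ + 1) ^ 2 + (l θ + 1) * (a1 * (m θ + 1) + a2 / 2 * (m θ + 1) ^ 2 +
        a3 / 6 * (m θ + 1) ^ 3) + (a1 * (m θ + 1) + a2 / 2 * (m θ + 1) ^ 2 +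
        a3 / 6 * (m θ + 1) ^ 3) ^ 2) =O[nhds 0] (fun _ : ℂ => (1:ℂ)) := by
      refine Filter.Tendsto.isBigO_one ℂ (c := 0) ?_
      have h1 := ((hvmto.pow 2).add (hvmto.mul hQto)).add (hQto.pow 2)
      simpa using h1
    exact (hrel'.mul hb).congr (fun θ => by ring) (fun θ => by rw [mul_one])
  -- Q² ≡ a1²u² + a1 a2 u³ mod θ⁴
  have hQ2 : (fun θ => (a1 * (m θ + 1) + a2 / 2 * (m θ + 1) ^ 2 +
      a3 / 6 * (m θ + 1) ^ 3) ^ 2 - (a1 ^ 2 * (m θ + 1) ^ 2 + a1 * a2 * (m θ + 1) ^ 3))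
      =O[nhds 0] fun θ : ℂ => θ ^ 4 := by
    have h4 := (hupow 4 (by norm_num)).const_mul_left (a2 ^ 2 / 4 + a1 * a3 / 3)
    have h5 := (hupow 5 (by norm_num)).const_mul_left (a2 * a3 / 6)
    have h6 := (hupow 6 (by norm_num)).const_mul_left (a3 ^ 2 / 36)
    exact ((h4.add h5).add h6).congr_left fun θ => by ring
  -- Q³ ≡ a1³u³ mod θ⁴
  have hQ3 : (fun θ => (a1 * (m θ + 1) + a2 / 2 * (m θ + 1) ^ 2 +
      a3 / 6 * (m θ + 1) ^ 3) ^ 3 - a1 ^ 3 * (m θ + 1) ^ 3)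
      =O[nhds 0] fun θ : ℂ => θ ^ 4 := by
    have h4 := (hupow 4 (by norm_num)).const_mul_left (3 * a1 ^ 2 * a2 / 2)
    have h5 := (hupow 5 (by norm_num)).const_mul_left (a1 ^ 2 * a3 / 2 + 3 * a1 * a2 ^ 2 / 4)
    have h6 := (hupow 6 (by norm_num)).const_mul_left (a2 ^ 3 / 8 + a1 * a2 * a3 / 2)
    have h7 := (hupow 7 (by norm_num)).const_mul_left (a2 ^ 2 * a3 / 8 + a1 * a3 ^ 2 / 12)
    have h8 := (hupow 8 (by norm_num)).const_mul_left (a2 * a3 ^ 2 / 24)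
    have h9 := (hupow 9 (by norm_num)).const_mul_left (a3 ^ 3 / 216)
    exact ((((h4.add h5).add h6).add h7).add h8).add h9 |>.congr_left fun θ => by ring
  -- log(-l) expansion in u
  have hLl2 : (fun θ => Complex.log (-(l θ)) + (a1 * (m θ + 1) + (a2 / 2 + a1 ^ 2 / 2) *
      (m θ + 1) ^ 2 + (a3 / 6 + a1 * a2 / 2 + a1 ^ 3 / 3) * (m θ + 1) ^ 3))
      =O[nhds 0] fun θ : ℂ => θ ^ 4 := by
    have hcomb := ((((hLl.sub hrel').sub (hv2.const_mul_left (1/2))).sub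
      (hQ2.const_mul_left (1/2))).sub (hv3.const_mul_left (1/3))).sub
      (hQ3.const_mul_left (1/3))
    exact hcomb.congr_left fun θ => by ring
  -- eventual equality contribution
  have hdehnO : (fun θ : ℂ => Complex.I * θ / 2 - ((p : ℂ) * Complex.log (-(m θ)) +
      (q : ℂ) * Complex.log (-(l θ)))) =O[nhds 0] fun θ : ℂ => θ ^ 4 := by
    have heq : (fun θ : ℂ => Complex.I * θ / 2 - ((p : ℂ) * Complex.log (-(m θ)) +
        (q : ℂ) * Complex.log (-(l θ)))) =ᶠ[nhds 0] fun _ => (0 : ℂ) :=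
      hdehn.mono fun θ h => by dsimp only; rw [h]; ring
    exact heq.trans_isBigO (isBigO_zero _ _)
  -- the fundamental expansion F = iθ/2 - (Au + Bu² + Cu³) = O(θ⁴)
  have hF : (fun θ : ℂ => Complex.I * θ / 2 - (A * (m θ + 1) + B * (m θ + 1) ^ 2 +
      C * (m θ + 1) ^ 3)) =O[nhds 0] fun θ : ℂ => θ ^ 4 := by
    have hcomb := (hdehnO.add (hLm.const_mul_left (p : ℂ))).add (hLl2.const_mul_left (q : ℂ))
    exact hcomb.congr_left fun θ => by rw [hA_def, hB_def, hC_def]; ring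
  -- auxiliary O facts
  have hu2 : (fun θ => (m θ + 1) ^ 2) =O[nhds 0] fun θ : ℂ => θ ^ 2 := huO.pow 2
  have hu3 : (fun θ => (m θ + 1) ^ 3) =O[nhds 0] fun θ : ℂ => θ ^ 3 := huO.pow 3
  have hθref : (fun θ : ℂ => θ) =O[nhds 0] fun θ : ℂ => θ := isBigO_refl _ _
  -- step 1 : u - αθ = O(θ²)
  have e1 : (fun θ => (m θ + 1) - α * θ) =O[nhds 0] fun θ : ℂ => θ ^ 2 := by
    have hcomb := ((hF.trans (pow_isBigO_pow' (by norm_num : 2 ≤ 4))).add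
      (hu2.const_mul_left B)).add
      ((hu3.trans (pow_isBigO_pow' (by norm_num : 2 ≤ 3))).const_mul_left C)
    refine (hcomb.const_mul_left (-(1/A))).congr_left fun θ => ?_
    rw [hα_def]
    field_simp
    ring
  -- step 2 : u² - α²θ² = O(θ³)
  have e2 : (fun θ => (m θ + 1) ^ 2 - α ^ 2 * θ ^ 2) =O[nhds 0] fun θ : ℂ => θ ^ 3 := by
    have hsum : (fun θ => (m θ + 1) + α * θ) =O[nhds 0] fun θ : ℂ => θ :=
      huO.add (hθref.const_mul_left α)
    exact (e1.mul hsum).congr (fun θ => by ring) (fun θ => by ring)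
  -- step 3 : u - αθ - βθ² = O(θ³)
  have e3 : (fun θ => (m θ + 1) - α * θ - β * θ ^ 2) =O[nhds 0] fun θ : ℂ => θ ^ 3 := by
    have hcomb := ((hF.trans (pow_isBigO_pow' (by norm_num : 3 ≤ 4))).add
      (e2.const_mul_left B)).add (hu3.const_mul_left C)
    refine (hcomb.const_mul_left (-(1/A))).congr_left fun θ => ?_
    rw [hβ_def, hα_def]
    field_simp
    ring
  -- step 4 : u² - α²θ² - 2αβθ³ = O(θ⁴)
  have e4 : (fun θ => (m θ + 1) ^ 2 - (α ^ 2 * θ ^ 2 + 2 * α * β * θ ^ 3))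
      =O[nhds 0] fun θ : ℂ => θ ^ 4 := by
    have hθ21 : (fun θ : ℂ => θ ^ 2) =O[nhds 0] fun θ : ℂ => θ :=
      (pow_isBigO_pow' (by norm_num : 1 ≤ 2)).congr_right fun θ => pow_one θ
    have hθ31 : (fun θ : ℂ => θ ^ 3) =O[nhds 0] fun θ : ℂ => θ :=
      (pow_isBigO_pow' (by norm_num : 1 ≤ 3)).congr_right fun θ => pow_one θ
    have hαβθ : (fun θ : ℂ => α * θ + β * θ ^ 2) =O[nhds 0] fun θ : ℂ => θ :=
      (hθref.const_mul_left α).add (hθ21.const_mul_left β)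
    have p1 := ((hαβθ.mul e3).const_mul_left 2).congr_right
      (fun θ : ℂ => by show θ * θ ^ 3 = θ ^ 4; ring)
    have p2 := (e3.mul (e3.trans hθ31)).congr_right
      (fun θ : ℂ => by show θ ^ 3 * θ = θ ^ 4; ring)
    have p3 := (isBigO_refl (fun θ : ℂ => θ ^ 4) (nhds 0)).const_mul_left (β ^ 2)
    exact ((p1.add p2).add p3).congr_left fun θ => by ring
  -- step 5 : u³ - α³θ³ = O(θ⁴)
  have e5 : (fun θ => (m θ + 1) ^ 3 - α ^ 3 * θ ^ 3) =O[nhds 0] fun θ : ℂ => θ ^ 4 := by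
    have hsec : (fun θ => (m θ + 1) ^ 2 + α * θ * (m θ + 1) + α ^ 2 * θ ^ 2)
        =O[nhds 0] fun θ : ℂ => θ ^ 2 := by
      have h1 := (hθref.mul huO).const_mul_left α
      have h2 := (isBigO_refl (fun θ : ℂ => θ ^ 2) (nhds 0)).const_mul_left (α ^ 2)
      exact (hu2.add (h1.congr (fun θ => by ring) (fun θ => by ring))).add h2
    exact (e1.mul hsec).congr (fun θ => by ring) (fun θ => by ring)
  -- step 6 : u - (αθ + βθ² + γθ³) = O(θ⁴)
  have e6 : (fun θ => (m θ + 1) - (α * θ + β * θ ^ 2 + γ * θ ^ 3))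
      =O[nhds 0] fun θ : ℂ => θ ^ 4 := by
    have hcomb := (hF.add (e4.const_mul_left B)).add (e5.const_mul_left C)
    have hI : Complex.I = 2 * A * α := by rw [hα_def]; field_simp
    have hβA : A * β = -(B * α ^ 2) := by rw [hβ_def]; field_simp
    have hγA : A * γ = -(2 * B * α * β + C * α ^ 3) := by rw [hγ_def]; field_simp
    refine (hcomb.const_mul_left (-(1/A))).congr_left fun θ => ?_
    have hkey : ∀ Zv Tv : ℂ, Zv = -A * Tv → -(1/A) * Zv = Tv := by
      intro Zv Tv h
      rw [h]
      field_simp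
    apply hkey
    linear_combination (θ/2) * hI - θ ^ 2 * hβA - θ ^ 3 * hγA
  -- scalar coefficient identities
  have hB2 : B = A / 2 := by rw [hB_def, hA_def, ha2]; ring
  have hB2' : B' = A' / 2 := by rw [hB'_def, hA'_def, ha2]; ring
  have hPA : ((p : ℂ) + a1 * q) = -A := by rw [hA_def]; ring
  have hRA : ((r : ℂ) + a1 * s) = -A' := by rw [hA'_def]; ring
  have key : A * C' - A' * C =
      -(2 * a1 - 3 * a1 ^ 2 + a1 ^ 3 - a3) * ((p : ℂ) * s - (q : ℂ) * r) / 6 := by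
    rw [hA_def, hC_def, hA'_def, hC'_def, ha2]
    ring
  have hα3 : α ^ 3 = -Complex.I / (8 * A ^ 3) := by
    rw [hα_def, div_pow, show Complex.I ^ 3 = -Complex.I by
      simp [pow_succ, Complex.I_mul_I], show (2 * A) ^ 3 = 8 * A ^ 3 by ring, neg_div]
  have hc1 : A' * α = Complex.I * ((r : ℂ) + a1 * s) / (2 * ((p : ℂ) + a1 * q)) := by
    rw [hRA, hPA, hα_def]
    field_simp
  have hc2 : A' * β + B' * α ^ 2 = 0 := by
    rw [hβ_def, hB2, hB2']
    field_simp
    ring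
  have hc3 : A' * γ + 2 * B' * α * β + C' * α ^ 3 =
      Complex.I * (2 * a1 - 3 * a1 ^ 2 + a1 ^ 3 - a3) * ((p : ℂ) * s - (q : ℂ) * r) /
        (48 * ((p : ℂ) + a1 * q) ^ 4) := by
    have hL : A' * γ + 2 * B' * α * β + C' * α ^ 3 = α ^ 3 * (A * C' - A' * C) / A := by
      rw [hγ_def, hβ_def, hB2, hB2']
      field_simp
      ring
    rw [hL, hα3, key, hPA]
    field_simp
    ring
  -- final assembly
  have hfin := ((hLm.const_mul_left (r : ℂ)).add (hLl2.const_mul_left (s : ℂ))).add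
    ((e6.const_mul_left A').add ((e4.const_mul_left B').add (e5.const_mul_left C')))
  refine hfin.congr_left fun θ => ?_
  have hexp : A' * ((m θ + 1) - (α * θ + β * θ ^ 2 + γ * θ ^ 3)) +
      (B' * ((m θ + 1) ^ 2 - (α ^ 2 * θ ^ 2 + 2 * α * β * θ ^ 3)) +
        C' * ((m θ + 1) ^ 3 - α ^ 3 * θ ^ 3)) =
      A' * (m θ + 1) + B' * (m θ + 1) ^ 2 + C' * (m θ + 1) ^ 3 -
        ((A' * α) * θ + (A' * β + B' * α ^ 2) * θ ^ 2 +
          (A' * γ + 2 * B' * α * β + C' * α ^ 3) * θ ^ 3) := by ring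
  rw [hexp, hc1, hc2, hc3, hA'_def, hB'_def, hC'_def]
  ring
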